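/- For any subset S ⊆ [n], the correlation of the parity character χ_S with the label y under the spurious distribution D_λ satisfies E_{(x,y)∼D_λ}[χ_S(x)·y] = f̂_c(S) + (2λ−1)·f̂_s(S), where f̂ denotes Fourier coefficients under the uniform measure. In particular this equals f̂_c(S) if S ⊆ [c], equals (2λ−1)·f̂_s(S) if S ⊆ [s], and equals 0 otherwise. -/

import Mathlib

open scoped Classical

noncomputable section

/-- Boolean vectors of length `m`. -/
abbrev BVec (m : ℕ) := Fin m → Bool

/-- The boolean hypercube split into core, spurious and noise blocks. -/
abbrev Cube (c s u : ℕ) := BVec c × BVec s × BVec u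

/-- Uniform probability mass on the hypercube. -/
def pUnif (c s u : ℕ) : Cube c s u → ℝ := fun _ => ((2 : ℝ) ^ (c + s + u))⁻¹

/-- `D_same`: uniform conditioned on the core and spurious features agreeing. -/
def pSame (c s u : ℕ) (fc : BVec c → ℝ) (fs : BVec s → ℝ) : Cube c s u → ℝ := fun x =>
  if fc x.1 = fs x.2.1 then
    pUnif c s u x / (∑ y : Cube c s u, if fc y.1 = fs y.2.1 then pUnif c s u y else 0)
  else 0

/-- `D_diff`: uniform conditioned on the core and spurious features disagreeing. -/
def pDiff (c s u : ℕ) (fc : BVec c → ℝ) (fs : BVec s → ℝ) : Cube c s u → ℝ := fun x =>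
  if fc x.1 ≠ fs x.2.1 then
    pUnif c s u x / (∑ y : Cube c s u, if fc y.1 ≠ fs y.2.1 then pUnif c s u y else 0)
  else 0

/-- `D_λ := λ·D_same + (1−λ)·D_diff`. -/
def pLam (c s u : ℕ) (fc : BVec c → ℝ) (fs : BVec s → ℝ) (lam : ℝ) : Cube c s u → ℝ :=
  fun x => lam * pSame c s u fc fs x + (1 - lam) * pDiff c s u fc fs x

/-- The real value of a boolean bit: `true ↦ 1`, `false ↦ -1`. -/
def bval (b : Bool) : ℝ := if b then 1 else -1

/-- Parity character on a block. -/
def chi {m : ℕ} (S : Finset (Fin m)) (v : BVec m) : ℝ := ∏ i ∈ S, bval (v i)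

/-- Parity character `χ_S` on the full cube, with `S` given by its three blocks. -/
def fullChi (c s u : ℕ) (Sc : Finset (Fin c)) (Ss : Finset (Fin s)) (Su : Finset (Fin u))
    (x : Cube c s u) : ℝ :=
  chi Sc x.1 * chi Ss x.2.1 * chi Su x.2.2

/-- Fourier coefficient of a function on the full cube, under the uniform measure. -/
def hatFull (c s u : ℕ) (g : Cube c s u → ℝ) (Sc : Finset (Fin c)) (Ss : Finset (Fin s))
    (Su : Finset (Fin u)) : ℝ :=
  ∑ x : Cube c s u, pUnif c s u x * g x * fullChi c s u Sc Ss Su x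

/-- Fourier coefficient of a block function under the uniform measure on its block. -/
def hatBlock {m : ℕ} (f : BVec m → ℝ) (S : Finset (Fin m)) : ℝ :=
  ((2 : ℝ) ^ m)⁻¹ * ∑ v : BVec m, f v * chi S v

lemma sum_cube_factor (c s u : ℕ) (F : BVec c → ℝ) (G : BVec s → ℝ) (H : BVec u → ℝ) :
    ∑ x : Cube c s u, F x.1 * G x.2.1 * H x.2.2
      = (∑ v, F v) * (∑ v, G v) * (∑ v, H v) := by
  simp only [Fintype.sum_prod_type, mul_assoc]
  rw [Finset.sum_mul]
  refine Finset.sum_congr rfl fun a _ => ?_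
  rw [Finset.sum_mul_sum]
  simp only [Finset.mul_sum]

lemma sum_chi {m : ℕ} (S : Finset (Fin m)) :
    ∑ v : BVec m, chi S v = if S = ∅ then (2:ℝ)^m else 0 := by
  have h1 : ∀ v : BVec m, chi S v = ∏ i, (if i ∈ S then bval (v i) else 1) := by
    intro v
    rw [chi, Finset.prod_ite_mem Finset.univ S (fun i => bval (v i)), Finset.univ_inter]
  simp_rw [h1]
  rw [← Fintype.piFinset_univ, ← Finset.prod_univ_sum (t := fun _ => (Finset.univ : Finset Bool)) (f := fun i b => if i ∈ S then bval b else 1)]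
  have h2 : ∀ i : Fin m, (∑ b : Bool, if i ∈ S then bval b else 1) = if i ∈ S then 0 else 2 := by
    intro i; by_cases h : i ∈ S <;> simp [h, bval]
  simp_rw [h2]
  by_cases hS : S = ∅
  · simp [hS]
  · rw [if_neg hS]
    obtain ⟨i, hi⟩ := Finset.nonempty_iff_ne_empty.2 hS
    exact Finset.prod_eq_zero (Finset.mem_univ i) (by simp [hi])

lemma card_bvec (m : ℕ) : (Fintype.card (BVec m) : ℝ) = 2 ^ m := by
  simp [BVec]

lemma ite_eq_pm (p a b : ℝ) (ha : a = 1 ∨ a = -1) (hb : b = 1 ∨ b = -1) :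
    (if a = b then p else 0) = p * (1 + a * b) / 2 := by
  rcases ha with ha | ha <;> rcases hb with hb | hb <;> subst ha <;> subst hb <;> norm_num

lemma ite_ne_pm (p a b : ℝ) (ha : a = 1 ∨ a = -1) (hb : b = 1 ∨ b = -1) :
    (if a ≠ b then p else 0) = p * (1 - a * b) / 2 := by
  rcases ha with ha | ha <;> rcases hb with hb | hb <;> subst ha <;> subst hb <;> norm_num

lemma sum_pUnif (c s u : ℕ) : ∑ x : Cube c s u, pUnif c s u x = 1 := by
  simp only [pUnif]
  rw [Finset.sum_const, Finset.card_univ]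
  have : (Fintype.card (Cube c s u) : ℝ) = 2 ^ (c + s + u) := by
    simp [Cube, BVec, pow_add]; ring
  rw [nsmul_eq_mul, this]
  simp

lemma sum_cross (c s u : ℕ) (fc : BVec c → ℝ) (fs : BVec s → ℝ)
    (hfc_unb : (∑ v : BVec c, fc v) = 0) :
    ∑ x : Cube c s u, pUnif c s u x * (fc x.1 * fs x.2.1) = 0 := by
  have : ∀ x : Cube c s u, pUnif c s u x * (fc x.1 * fs x.2.1)
      = ((2 : ℝ) ^ (c + s + u))⁻¹ * (fc x.1 * fs x.2.1 * (fun _ : BVec u => (1:ℝ)) x.2.2) := by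
    intro x; simp only [pUnif]; ring
  simp_rw [this]
  rw [← Finset.mul_sum]
  have h2 := sum_cube_factor c s u fc fs (fun _ => 1)
  rw [h2, hfc_unb]
  ring

lemma Zsame (c s u : ℕ) (fc : BVec c → ℝ) (fs : BVec s → ℝ)
    (hfc : ∀ v, fc v = 1 ∨ fc v = -1) (hfs : ∀ v, fs v = 1 ∨ fs v = -1)
    (hfc_unb : (∑ v : BVec c, fc v) = 0) :
    (∑ y : Cube c s u, if fc y.1 = fs y.2.1 then pUnif c s u y else 0) = 1/2 := by
  have h : ∀ y : Cube c s u, (if fc y.1 = fs y.2.1 then pUnif c s u y else 0)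
      = pUnif c s u y / 2 + pUnif c s u y * (fc y.1 * fs y.2.1) / 2 := by
    intro y; rw [ite_eq_pm _ _ _ (hfc _) (hfs _)]; ring
  simp_rw [h]
  rw [Finset.sum_add_distrib, ← Finset.sum_div, ← Finset.sum_div, sum_pUnif,
    sum_cross c s u fc fs hfc_unb]
  norm_num

lemma Zdiff (c s u : ℕ) (fc : BVec c → ℝ) (fs : BVec s → ℝ)
    (hfc : ∀ v, fc v = 1 ∨ fc v = -1) (hfs : ∀ v, fs v = 1 ∨ fs v = -1)
    (hfc_unb : (∑ v : BVec c, fc v) = 0) :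
    (∑ y : Cube c s u, if fc y.1 ≠ fs y.2.1 then pUnif c s u y else 0) = 1/2 := by
  have h : ∀ y : Cube c s u, (if fc y.1 ≠ fs y.2.1 then pUnif c s u y else 0)
      = pUnif c s u y / 2 - pUnif c s u y * (fc y.1 * fs y.2.1) / 2 := by
    intro y; rw [ite_ne_pm _ _ _ (hfc _) (hfs _)]; ring
  simp_rw [h]
  rw [Finset.sum_sub_distrib, ← Finset.sum_div, ← Finset.sum_div, sum_pUnif,
    sum_cross c s u fc fs hfc_unb]
  norm_num

lemma pLam_eq (c s u : ℕ) (fc : BVec c → ℝ) (fs : BVec s → ℝ)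
    (hfc : ∀ v, fc v = 1 ∨ fc v = -1) (hfs : ∀ v, fs v = 1 ∨ fs v = -1)
    (hfc_unb : (∑ v : BVec c, fc v) = 0) (lam : ℝ) (x : Cube c s u) :
    pLam c s u fc fs lam x
      = pUnif c s u x * (1 + (2 * lam - 1) * (fc x.1 * fs x.2.1)) := by
  simp only [pLam, pSame, pDiff]
  rw [Zsame c s u fc fs hfc hfs hfc_unb, Zdiff c s u fc fs hfc hfs hfc_unb,
    ite_eq_pm _ _ _ (hfc _) (hfs _), ite_ne_pm _ _ _ (hfc _) (hfs _)]
  ring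

lemma hatFull_fc (c s u : ℕ) (fc : BVec c → ℝ)
    (Sc : Finset (Fin c)) (Ss : Finset (Fin s)) (Su : Finset (Fin u)) :
    hatFull c s u (fun x => fc x.1) Sc Ss Su
      = ((2:ℝ)^(c+s+u))⁻¹ * ((∑ v : BVec c, fc v * chi Sc v)
          * (∑ v : BVec s, chi Ss v) * (∑ v : BVec u, chi Su v)) := by
  have h : ∀ x : Cube c s u, pUnif c s u x * fc x.1 * fullChi c s u Sc Ss Su x
      = ((2:ℝ)^(c+s+u))⁻¹ * ((fc x.1 * chi Sc x.1) * chi Ss x.2.1 * chi Su x.2.2) := by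
    intro x; simp only [pUnif, fullChi]; ring
  simp only [hatFull]
  simp_rw [h]
  rw [← Finset.mul_sum, sum_cube_factor c s u (fun v => fc v * chi Sc v) (chi Ss) (chi Su)]

lemma hatFull_fs (c s u : ℕ) (fs : BVec s → ℝ)
    (Sc : Finset (Fin c)) (Ss : Finset (Fin s)) (Su : Finset (Fin u)) :
    hatFull c s u (fun x => fs x.2.1) Sc Ss Su
      = ((2:ℝ)^(c+s+u))⁻¹ * ((∑ v : BVec c, chi Sc v)
          * (∑ v : BVec s, fs v * chi Ss v) * (∑ v : BVec u, chi Su v)) := by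
  have h : ∀ x : Cube c s u, pUnif c s u x * fs x.2.1 * fullChi c s u Sc Ss Su x
      = ((2:ℝ)^(c+s+u))⁻¹ * (chi Sc x.1 * (fs x.2.1 * chi Ss x.2.1) * chi Su x.2.2) := by
    intro x; simp only [pUnif, fullChi]; ring
  simp only [hatFull]
  simp_rw [h]
  rw [← Finset.mul_sum, sum_cube_factor c s u (chi Sc) (fun v => fs v * chi Ss v) (chi Su)]


/-- `E_{(x,y)∼D_λ}[χ_S(x)·y] = f̂_c(S) + (2λ−1)·f̂_s(S)`; in particular it equals `f̂_c(S)`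
when `S ⊆ [c]`, equals `(2λ−1)·f̂_s(S)` when `S ⊆ [s]`, and vanishes otherwise. -/
theorem chi_label_correlation (c s u : ℕ) (fc : BVec c → ℝ) (fs : BVec s → ℝ)
    (hfc : ∀ v, fc v = 1 ∨ fc v = -1) (hfs : ∀ v, fs v = 1 ∨ fs v = -1)
    (hfc_unb : (∑ v : BVec c, fc v) = 0) (hfs_unb : (∑ v : BVec s, fs v) = 0)
    (hpos_same : 0 < ∑ y : Cube c s u, if fc y.1 = fs y.2.1 then pUnif c s u y else 0)
    (hpos_diff : 0 < ∑ y : Cube c s u, if fc y.1 ≠ fs y.2.1 then pUnif c s u y else 0)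
    (lam : ℝ) (hlam₁ : 1 / 2 ≤ lam) (hlam₂ : lam ≤ 1)
    (Sc : Finset (Fin c)) (Ss : Finset (Fin s)) (Su : Finset (Fin u)) :
    (∑ x : Cube c s u, pLam c s u fc fs lam x * fullChi c s u Sc Ss Su x * fc x.1)
        = hatFull c s u (fun x => fc x.1) Sc Ss Su
            + (2 * lam - 1) * hatFull c s u (fun x => fs x.2.1) Sc Ss Su ∧
    (Ss = ∅ ∧ Su = ∅ →
      (∑ x : Cube c s u, pLam c s u fc fs lam x * fullChi c s u Sc Ss Su x * fc x.1)
        = hatBlock fc Sc) ∧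
    (Sc = ∅ ∧ Su = ∅ →
      (∑ x : Cube c s u, pLam c s u fc fs lam x * fullChi c s u Sc Ss Su x * fc x.1)
        = (2 * lam - 1) * hatBlock fs Ss) ∧
    (¬(Ss = ∅ ∧ Su = ∅) → ¬(Sc = ∅ ∧ Su = ∅) →
      (∑ x : Cube c s u, pLam c s u fc fs lam x * fullChi c s u Sc Ss Su x * fc x.1) = 0) := by
  have hT : (∑ x : Cube c s u, pLam c s u fc fs lam x * fullChi c s u Sc Ss Su x * fc x.1)
      = hatFull c s u (fun x => fc x.1) Sc Ss Su
          + (2 * lam - 1) * hatFull c s u (fun x => fs x.2.1) Sc Ss Su := by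
    have hsq : ∀ v, fc v * fc v = 1 := fun v => by
      rcases hfc v with h | h <;> rw [h] <;> norm_num
    have h : ∀ x : Cube c s u, pLam c s u fc fs lam x * fullChi c s u Sc Ss Su x * fc x.1
        = pUnif c s u x * fc x.1 * fullChi c s u Sc Ss Su x
          + (2 * lam - 1) * (pUnif c s u x * fs x.2.1 * fullChi c s u Sc Ss Su x) := by
      intro x
      rw [pLam_eq c s u fc fs hfc hfs hfc_unb lam x]
      have h2 := hsq x.1
      linear_combination ((2 * lam - 1) * pUnif c s u x * fs x.2.1
        * fullChi c s u Sc Ss Su x) * h2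
    simp_rw [h]
    rw [Finset.sum_add_distrib, ← Finset.mul_sum]
    rfl
  refine ⟨hT, ?_, ?_, ?_⟩
  · rintro ⟨rfl, rfl⟩
    rw [hT, hatFull_fc, hatFull_fs]
    simp only [chi, Finset.prod_empty, mul_one, sum_chi, if_pos rfl]
    rw [hfs_unb, hatBlock]
    simp only [chi]
    rw [pow_add, pow_add]
    field_simp
    simp only [Finset.sum_const, Finset.card_univ, nsmul_eq_mul, mul_one, card_bvec, Fintype.card_pi, Fintype.card_bool, Finset.prod_const, Finset.card_fin, Fintype.card_fin, Nat.cast_pow, Nat.cast_ofNat]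
    ring
  · rintro ⟨rfl, rfl⟩
    rw [hT, hatFull_fc, hatFull_fs]
    simp only [chi, Finset.prod_empty, mul_one, sum_chi, if_pos rfl]
    rw [hfc_unb, hatBlock]
    simp only [chi]
    rw [pow_add, pow_add]
    field_simp
    simp only [Finset.sum_const, Finset.card_univ, nsmul_eq_mul, mul_one, card_bvec, Fintype.card_pi, Fintype.card_bool, Finset.prod_const, Finset.card_fin, Fintype.card_fin, Nat.cast_pow, Nat.cast_ofNat]
    ring
  · intro h1 h2
    rw [hT, hatFull_fc, hatFull_fs, sum_chi, sum_chi, sum_chi]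
    by_cases hSu : Su = ∅
    · have hSs : Ss ≠ ∅ := fun h => h1 ⟨h, hSu⟩
      have hSc : Sc ≠ ∅ := fun h => h2 ⟨h, hSu⟩
      simp [hSs, hSc]
    · simp [hSu]
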